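/- Let D = (X,Y,E) be a homogeneous 2-partite digraph that is not bipartite, and suppose some vertex u ∈ X satisfies |N⁺(u)| = n with 2 ≤ n finite. Then |Y| = n + 1 and D ≅ M_{n+1}. -/

import Mathlib

/-- A 2-partite digraph `D = (X, Y, E)`: `X` and `Y` are disjoint sets covering the
vertex set, every edge goes between the two sides, and no two opposite edges exist. -/
structure TwoPartiteDigraph (V : Type*) where
  X : Set V
  Y : Set V
  cover : X ∪ Y = Set.univ
  disj : Disjoint X Y
  E : V → V → Prop
  mem_of_edge : ∀ u v, E u v → (u ∈ X ∧ v ∈ Y) ∨ (u ∈ Y ∧ v ∈ X)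
  not_opposite : ∀ u v, E u v → ¬ E v u

namespace TwoPartiteDigraph

variable {V V₁ V₂ : Type*}

/-- Out-neighbourhood (successors). -/
def Nplus (D : TwoPartiteDigraph V) (v : V) : Set V := {w | D.E v w}

/-- In-neighbourhood (predecessors). -/
def Nminus (D : TwoPartiteDigraph V) (v : V) : Set V := {w | D.E w v}

/-- Adjacency in the underlying undirected bipartite graph. -/
def Adj (D : TwoPartiteDigraph V) (u v : V) : Prop := D.E u v ∨ D.E v u

/-- `v^⊥`: the vertices on the other side not adjacent to `v`. -/
def perp (D : TwoPartiteDigraph V) (v : V) : Set V :=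
  {w | ((v ∈ D.X ∧ w ∈ D.Y) ∨ (v ∈ D.Y ∧ w ∈ D.X)) ∧ ¬ D.Adj v w}

/-- `D` is bipartite if all edges go from `X` to `Y`, or all from `Y` to `X`. -/
def Bipartite (D : TwoPartiteDigraph V) : Prop :=
  (∀ u v, D.E u v → u ∈ D.X) ∨ (∀ u v, D.E u v → u ∈ D.Y)

/-- `φ` is an isomorphism between the subdigraphs induced on `A` and on `φ '' A`,
respecting the bipartition. -/
def IsPartialIso (D : TwoPartiteDigraph V) (A : Set V) (φ : V → V) : Prop :=
  Set.InjOn φ A ∧ (∀ a ∈ A, (a ∈ D.X ↔ φ a ∈ D.X)) ∧ (∀ a ∈ A, (a ∈ D.Y ↔ φ a ∈ D.Y)) ∧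
  ∀ a ∈ A, ∀ b ∈ A, (D.E a b ↔ D.E (φ a) (φ b))

/-- A bipartition-preserving automorphism of `D`. -/
def IsAuto (D : TwoPartiteDigraph V) (α : Equiv.Perm V) : Prop :=
  (∀ v, v ∈ D.X ↔ α v ∈ D.X) ∧ (∀ v, v ∈ D.Y ↔ α v ∈ D.Y) ∧
  ∀ u v, D.E u v ↔ D.E (α u) (α v)

/-- `D` is homogeneous: every isomorphism between finite induced subdigraphs respecting
the bipartition extends to a bipartition-preserving automorphism of `D`. -/
def Homogeneous (D : TwoPartiteDigraph V) : Prop :=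
  ∀ A : Set V, A.Finite → ∀ φ : V → V, D.IsPartialIso A φ →
    ∃ α : Equiv.Perm V, D.IsAuto α ∧ ∀ a ∈ A, α a = φ a

/-- The underlying undirected bipartite graph is complete bipartite. -/
def CompleteBip (D : TwoPartiteDigraph V) : Prop := ∀ x ∈ D.X, ∀ y ∈ D.Y, D.Adj x y

/-- `D` is a generic 2-partite digraph. -/
def IsGeneric (D : TwoPartiteDigraph V) : Prop :=
  D.CompleteBip ∧
  ∀ AX BX : Set V, AX.Finite → BX.Finite → AX ⊆ D.X → BX ⊆ D.X → Disjoint AX BX →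
  ∀ AY BY : Set V, AY.Finite → BY.Finite → AY ⊆ D.Y → BY ⊆ D.Y → Disjoint AY BY →
    (∃ y ∈ D.Y, AX ⊆ D.Nplus y ∧ BX ⊆ D.Nminus y) ∧
    (∃ x ∈ D.X, AY ⊆ D.Nplus x ∧ BY ⊆ D.Nminus x)

/-- `D` is a generic orientation of a generic bipartite graph. -/
def IsGenericOrientation (D : TwoPartiteDigraph V) : Prop :=
  ∀ AX BX CX : Set V, AX.Finite → BX.Finite → CX.Finite →
    AX ⊆ D.X → BX ⊆ D.X → CX ⊆ D.X →
    Disjoint AX BX → Disjoint AX CX → Disjoint BX CX →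
  ∀ AY BY CY : Set V, AY.Finite → BY.Finite → CY.Finite →
    AY ⊆ D.Y → BY ⊆ D.Y → CY ⊆ D.Y →
    Disjoint AY BY → Disjoint AY CY → Disjoint BY CY →
    (∃ y ∈ D.Y, AX ⊆ D.Nplus y ∧ BX ⊆ D.Nminus y ∧ CX ⊆ D.perp y) ∧
    (∃ x ∈ D.X, AY ⊆ D.Nplus x ∧ BY ⊆ D.Nminus x ∧ CY ⊆ D.perp x)

/-- `D` is (a copy of) `M_κ` with the matching oriented from `X` to `Y`:
there is a bijection `m : X → Y` such that the edges from `X` to `Y` form the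
perfect matching `{(x, m x)}` and the edges from `Y` to `X` form its bipartite
complement. -/
def IsMFixed (D : TwoPartiteDigraph V) : Prop :=
  ∃ m : V → V, Set.BijOn m D.X D.Y ∧
    (∀ x ∈ D.X, ∀ y ∈ D.Y, (D.E x y ↔ y = m x)) ∧
    (∀ x ∈ D.X, ∀ y ∈ D.Y, (D.E y x ↔ y ≠ m x))

/-- `D` is (a copy of) `M_κ`: one of the two directed parts is a perfect matching and
the other is the bipartite complement of a perfect matching. -/
def IsM (D : TwoPartiteDigraph V) : Prop :=
  ∃ m : V → V, Set.BijOn m D.X D.Y ∧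
    ((∀ x ∈ D.X, ∀ y ∈ D.Y, (D.E x y ↔ y = m x) ∧ (D.E y x ↔ y ≠ m x)) ∨
     (∀ x ∈ D.X, ∀ y ∈ D.Y, (D.E y x ↔ y = m x) ∧ (D.E x y ↔ y ≠ m x)))

/-- Isomorphism of 2-partite digraphs respecting the bipartitions. -/
def Isomorphic (D₁ : TwoPartiteDigraph V₁) (D₂ : TwoPartiteDigraph V₂) : Prop :=
  ∃ e : V₁ ≃ V₂, (∀ v, v ∈ D₁.X ↔ e v ∈ D₂.X) ∧ (∀ v, v ∈ D₁.Y ↔ e v ∈ D₂.Y) ∧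
    ∀ u v, D₁.E u v ↔ D₂.E (e u) (e v)

/-- `φ` is an isomorphism of finite induced subgraphs of the underlying undirected
bipartite graph, respecting the bipartition. -/
def IsGraphPartialIso (D : TwoPartiteDigraph V) (A : Set V) (φ : V → V) : Prop :=
  Set.InjOn φ A ∧ (∀ a ∈ A, (a ∈ D.X ↔ φ a ∈ D.X)) ∧ (∀ a ∈ A, (a ∈ D.Y ↔ φ a ∈ D.Y)) ∧
  ∀ a ∈ A, ∀ b ∈ A, (D.Adj a b ↔ D.Adj (φ a) (φ b))

/-- The underlying undirected bipartite graph of `D` is homogeneous. -/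
def GraphHomogeneous (D : TwoPartiteDigraph V) : Prop :=
  ∀ A : Set V, A.Finite → ∀ φ : V → V, D.IsGraphPartialIso A φ →
    ∃ α : Equiv.Perm V, ((∀ v, v ∈ D.X ↔ α v ∈ D.X) ∧ (∀ v, v ∈ D.Y ↔ α v ∈ D.Y) ∧
      ∀ u v, D.Adj u v ↔ D.Adj (α u) (α v)) ∧ ∀ a ∈ A, α a = φ a

/-- The underlying undirected bipartite graph of `D` is generic. -/
def UnderlyingGeneric (D : TwoPartiteDigraph V) : Prop :=
  ∀ UX VX : Set V, UX.Finite → VX.Finite → UX ⊆ D.X → VX ⊆ D.X → Disjoint UX VX →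
  ∀ UY VY : Set V, UY.Finite → VY.Finite → UY ⊆ D.Y → VY ⊆ D.Y → Disjoint UY VY →
    (∃ y ∈ D.Y, (∀ u ∈ UX, D.Adj y u) ∧ ∀ v ∈ VX, ¬ D.Adj y v) ∧
    (∃ x ∈ D.X, (∀ u ∈ UY, D.Adj x u) ∧ ∀ v ∈ VY, ¬ D.Adj x v)

end TwoPartiteDigraph

open TwoPartiteDigraph

namespace TwoPartiteDigraph

variable {V : Type*}

lemma notE_XX (D : TwoPartiteDigraph V) {a b : V} (ha : a ∈ D.X) (hb : b ∈ D.X) :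
    ¬ D.E a b := by
  intro h
  rcases D.mem_of_edge a b h with ⟨_, h2⟩ | ⟨h1, _⟩
  · exact Set.disjoint_left.mp D.disj hb h2
  · exact Set.disjoint_left.mp D.disj ha h1

lemma notE_YY (D : TwoPartiteDigraph V) {a b : V} (ha : a ∈ D.Y) (hb : b ∈ D.Y) :
    ¬ D.E a b := by
  intro h
  rcases D.mem_of_edge a b h with ⟨h1, _⟩ | ⟨_, h2⟩
  · exact Set.disjoint_left.mp D.disj h1 ha
  · exact Set.disjoint_left.mp D.disj h2 hb

lemma partialIso_of_subset_X (D : TwoPartiteDigraph V) {A : Set V} {φ : V → V}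
    (hA : A ⊆ D.X) (hinj : Set.InjOn φ A) (himg : ∀ a ∈ A, φ a ∈ D.X) :
    D.IsPartialIso A φ := by
  refine ⟨hinj, ?_, ?_, ?_⟩
  · intro a ha; simp [hA ha, himg a ha]
  · intro a ha
    constructor
    · intro h; exact absurd h (Set.disjoint_left.mp D.disj (hA ha))
    · intro h; exact absurd h (Set.disjoint_left.mp D.disj (himg a ha))
  · intro a ha b hb
    constructor
    · intro h; exact absurd h (D.notE_XX (hA ha) (hA hb))
    · intro h; exact absurd h (D.notE_XX (himg a ha) (himg b hb))

lemma partialIso_of_subset_Y (D : TwoPartiteDigraph V) {A : Set V} {φ : V → V}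
    (hA : A ⊆ D.Y) (hinj : Set.InjOn φ A) (himg : ∀ a ∈ A, φ a ∈ D.Y) :
    D.IsPartialIso A φ := by
  refine ⟨hinj, ?_, ?_, ?_⟩
  · intro a ha
    constructor
    · intro h; exact absurd (hA ha) (Set.disjoint_left.mp D.disj h)
    · intro h; exact absurd (himg a ha) (Set.disjoint_left.mp D.disj h)
  · intro a ha; simp [hA ha, himg a ha]
  · intro a ha b hb
    constructor
    · intro h; exact absurd h (D.notE_YY (hA ha) (hA hb))
    · intro h; exact absurd h (D.notE_YY (himg a ha) (himg b hb))

lemma auto_Nplus (D : TwoPartiteDigraph V) {α : Equiv.Perm V} (hα : D.IsAuto α) (x : V) :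
    D.Nplus (α x) = α '' D.Nplus x := by
  ext w
  constructor
  · intro hw
    refine ⟨α.symm w, ?_, α.apply_symm_apply w⟩
    have := (hα.2.2 x (α.symm w)).symm
    rw [α.apply_symm_apply] at this
    exact this.mp hw
  · rintro ⟨v, hv, rfl⟩
    exact (hα.2.2 x v).mp hv

end TwoPartiteDigraph

/-- If `D` is a homogeneous non-bipartite 2-partite digraph and some `u ∈ X` has
exactly `n` successors with `2 ≤ n` finite, then `|Y| = n + 1` and `D ≅ M_{n+1}`. -/
theorem stmt_15 {V : Type*} (D : TwoPartiteDigraph V) (hhom : D.Homogeneous)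
    (hnb : ¬ D.Bipartite) (u : V) (hu : u ∈ D.X) (n : ℕ) (hn : 2 ≤ n)
    (hfin : (D.Nplus u).Finite) (hcard : (D.Nplus u).ncard = n) :
    D.Y.Finite ∧ D.Y.ncard = n + 1 ∧ D.IsM := by
  classical
  have hne : Nonempty V := ⟨u⟩
  -- successors lie in Y, predecessors lie in Y (for x ∈ X)
  have hNpY : ∀ x ∈ D.X, D.Nplus x ⊆ D.Y := by
    intro x hx w hw
    rcases D.mem_of_edge x w hw with ⟨_, h⟩ | ⟨h, _⟩
    · exact h
    · exact absurd hx (Set.disjoint_left.mp D.disj.symm h)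
  have hNmY : ∀ x ∈ D.X, D.Nminus x ⊆ D.Y := by
    intro x hx w hw
    rcases D.mem_of_edge w x hw with ⟨_, h⟩ | ⟨h, _⟩
    · exact absurd hx (Set.disjoint_left.mp D.disj.symm h)
    · exact h
  have hSY : D.Nplus u ⊆ D.Y := hNpY u hu
  -- transitivity on X
  have htrans : ∀ x ∈ D.X, ∀ z ∈ D.X, ∃ α : Equiv.Perm V, D.IsAuto α ∧ α x = z := by
    intro x hx z hz
    have hiso : D.IsPartialIso {x} (fun _ => z) := by
      refine D.partialIso_of_subset_X (by simp [hx]) ?_ (by simp [hz])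
      intro a ha b hb _
      simp only [Set.mem_singleton_iff] at ha hb
      rw [ha, hb]
    obtain ⟨α, hα, hfix⟩ := hhom {x} (Set.finite_singleton x) _ hiso
    exact ⟨α, hα, hfix x rfl⟩
  -- every x ∈ X has finite out-neighbourhood of size n
  have hall : ∀ x ∈ D.X, (D.Nplus x).Finite ∧ (D.Nplus x).ncard = n := by
    intro x hx
    obtain ⟨α, hα, hαu⟩ := htrans u hu x hx
    have himg : D.Nplus x = α '' D.Nplus u := by rw [← hαu, D.auto_Nplus hα]
    rw [himg]
    exact ⟨hfin.image α, by rw [Set.ncard_image_of_injective _ α.injective, hcard]⟩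
  -- from non-bipartiteness: every x ∈ X has a predecessor
  have hminus : ∀ x ∈ D.X, ∃ y ∈ D.Y, D.E y x := by
    have : ∃ a b, D.E a b ∧ a ∈ D.Y ∧ b ∈ D.X := by
      unfold Bipartite at hnb
      push_neg at hnb
      obtain ⟨⟨a, b, hab, haX⟩, -⟩ := hnb
      have haY : a ∈ D.Y := by
        have : a ∈ D.X ∪ D.Y := by rw [D.cover]; trivial
        rcases this with h | h
        · exact absurd h haX
        · exact h
      rcases D.mem_of_edge a b hab with ⟨h1, _⟩ | ⟨_, h2⟩
      · exact absurd h1 haX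
      · exact ⟨a, b, hab, haY, h2⟩
    obtain ⟨a, b, hab, haY, hbX⟩ := this
    intro x hx
    obtain ⟨α, hα, hαb⟩ := htrans b hbX x hx
    refine ⟨α a, (hα.2.1 a).mp haY, ?_⟩
    have := (hα.2.2 a b).mp hab
    rwa [hαb] at this
  -- constancy of pairwise intersections of out-neighbourhoods
  have hpair : ∀ x1 ∈ D.X, ∀ x2 ∈ D.X, ∀ z1 ∈ D.X, ∀ z2 ∈ D.X, x1 ≠ x2 → z1 ≠ z2 →
      (D.Nplus x1 ∩ D.Nplus x2).ncard = (D.Nplus z1 ∩ D.Nplus z2).ncard := by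
    intro x1 hx1 x2 hx2 z1 hz1 z2 hz2 hx12 hz12
    set φ : V → V := fun v => if v = x1 then z1 else z2 with hφ
    have hiso : D.IsPartialIso {x1, x2} φ := by
      refine D.partialIso_of_subset_X ?_ ?_ ?_
      · intro a ha; rcases ha with rfl | ha
        · exact hx1
        · rw [Set.mem_singleton_iff] at ha; rw [ha]; exact hx2
      · intro a ha b hb hab
        simp only [Set.mem_insert_iff, Set.mem_singleton_iff] at ha hb
        rcases ha with rfl | rfl <;> rcases hb with rfl | rfl
        · rfl
        · rw [hφ] at hab; simp only [if_pos rfl, if_neg (Ne.symm hx12)] at hab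
          exact absurd hab hz12
        · rw [hφ] at hab; simp only [if_pos rfl, if_neg (Ne.symm hx12)] at hab
          exact absurd hab.symm hz12
        · rfl
      · intro a ha
        rw [hφ]
        by_cases h : a = x1 <;> simp [h, hz1, hz2]
    obtain ⟨α, hα, hfix⟩ := hhom {x1, x2} (Set.toFinite _) _ hiso
    have hα1 : α x1 = z1 := by
      rw [hfix x1 (by simp), hφ]; simp
    have hα2 : α x2 = z2 := by
      rw [hfix x2 (by simp), hφ]; simp [Ne.symm hx12]
    have himg : α '' (D.Nplus x1 ∩ D.Nplus x2) = D.Nplus z1 ∩ D.Nplus z2 := by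
      rw [Set.image_inter α.injective, ← D.auto_Nplus hα, ← D.auto_Nplus hα, hα1, hα2]
    rw [← himg, Set.ncard_image_of_injective _ α.injective]
  -- realization: every n-element subset of Y is an out-neighbourhood
  have hreal : ∀ T ⊆ D.Y, T.Finite → T.ncard = n → ∃ x ∈ D.X, D.Nplus x = T := by
    intro T hTY hTfin hTcard
    obtain ⟨f, hf⟩ := hfin.exists_bijOn_of_encard_eq (t := T)
      (by rw [← hfin.cast_ncard_eq, ← hTfin.cast_ncard_eq, hcard, hTcard])
    have hiso : D.IsPartialIso (D.Nplus u) f :=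
      D.partialIso_of_subset_Y hSY hf.injOn (fun a ha => hTY (hf.mapsTo ha))
    obtain ⟨α, hα, hfix⟩ := hhom (D.Nplus u) hfin _ hiso
    refine ⟨α u, (hα.1 u).mp hu, ?_⟩
    rw [D.auto_Nplus hα u]
    exact (Set.image_congr hfix).trans hf.image_eq
  -- the extra vertex y0
  obtain ⟨y0, hy0Y, hy0E⟩ := hminus u hu
  have hy0S : y0 ∉ D.Nplus u := fun h => D.not_opposite u y0 h hy0E
  -- two elements of S
  obtain ⟨s1, hs1, s2, hs2, hs12⟩ := (Set.one_lt_ncard hfin).mp (by omega : 1 < (D.Nplus u).ncard)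
  -- the auxiliary vertex x' with N⁺(x') = insert y0 (S \ {s1})
  have hT'card : (insert y0 (D.Nplus u \ {s1})).ncard = n := by
    rw [Set.ncard_insert_of_notMem (fun h => hy0S h.1) (hfin.diff),
      Set.ncard_diff_singleton_of_mem hs1, hcard]
    omega
  obtain ⟨x', hx'X, hx'N⟩ := hreal (insert y0 (D.Nplus u \ {s1}))
    (by
      intro z hz
      rcases hz with rfl | hz
      · exact hy0Y
      · exact hSY hz.1)
    ((hfin.diff).insert y0) hT'card
  have hux' : u ≠ x' := by
    intro h
    apply hy0S
    rw [h, hx'N]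
    exact Set.mem_insert _ _
  have hinterx' : D.Nplus u ∩ D.Nplus x' = D.Nplus u \ {s1} := by
    rw [hx'N]
    ext z
    simp only [Set.mem_inter_iff, Set.mem_insert_iff, Set.mem_diff, Set.mem_singleton_iff]
    constructor
    · rintro ⟨hz, rfl | ⟨-, hzs⟩⟩
      · exact absurd hz hy0S
      · exact ⟨hz, hzs⟩
    · rintro ⟨hz, hzs⟩
      exact ⟨hz, Or.inr ⟨hz, hzs⟩⟩
  have hk1 : (D.Nplus u ∩ D.Nplus x').ncard = n - 1 := by
    rw [hinterx', Set.ncard_diff_singleton_of_mem hs1, hcard]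
  -- Y = insert y0 S
  have hYeq : D.Y = insert y0 (D.Nplus u) := by
    by_contra hne'
    have hss : insert y0 (D.Nplus u) ⊂ D.Y :=
      HasSubset.Subset.ssubset_of_ne (Set.insert_subset hy0Y hSY) (fun h => hne' h.symm)
    obtain ⟨y'', hy''Y, hy''n⟩ := Set.exists_of_ssubset hss
    have hy''S : y'' ∉ D.Nplus u := fun h => hy''n (Set.mem_insert_of_mem _ h)
    have hy''0 : y'' ≠ y0 := fun h => hy''n (h ▸ Set.mem_insert _ _)
    -- T'' := insert y0 (insert y'' ((S \ {s1}) \ {s2}))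
    have hs2' : s2 ∈ D.Nplus u \ {s1} := ⟨hs2, Ne.symm hs12⟩
    have hd2 : ((D.Nplus u \ {s1}) \ {s2}).ncard = n - 2 := by
      rw [Set.ncard_diff_singleton_of_mem hs2',
        Set.ncard_diff_singleton_of_mem hs1, hcard]
      omega
    have hy''d : y'' ∉ (D.Nplus u \ {s1}) \ {s2} := fun h => hy''S h.1.1
    have hy0d : y0 ∉ insert y'' ((D.Nplus u \ {s1}) \ {s2}) := by
      rintro (h | h)
      · exact hy''0 h.symm
      · exact hy0S h.1.1
    have hT''card : (insert y0 (insert y'' ((D.Nplus u \ {s1}) \ {s2}))).ncard = n := by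
      rw [Set.ncard_insert_of_notMem hy0d (((hfin.diff).diff).insert _),
        Set.ncard_insert_of_notMem hy''d ((hfin.diff).diff), hd2]
      omega
    obtain ⟨x'', hx''X, hx''N⟩ := hreal (insert y0 (insert y'' ((D.Nplus u \ {s1}) \ {s2})))
      (by
        intro z hz
        rcases hz with rfl | rfl | hz
        · exact hy0Y
        · exact hy''Y
        · exact hSY hz.1.1)
      ((((hfin.diff).diff).insert _).insert _) hT''card
    have hux'' : u ≠ x'' := by
      intro h
      apply hy0S
      rw [h, hx''N]
      exact Set.mem_insert _ _
    have hinterx'' : D.Nplus u ∩ D.Nplus x'' = (D.Nplus u \ {s1}) \ {s2} := by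
      rw [hx''N]
      ext z
      simp only [Set.mem_inter_iff, Set.mem_insert_iff, Set.mem_diff, Set.mem_singleton_iff]
      constructor
      · rintro ⟨hz, rfl | rfl | ⟨⟨-, h1⟩, h2⟩⟩
        · exact absurd hz hy0S
        · exact absurd hz hy''S
        · exact ⟨⟨hz, h1⟩, h2⟩
      · rintro ⟨⟨hz, h1⟩, h2⟩
        exact ⟨hz, Or.inr (Or.inr ⟨⟨hz, h1⟩, h2⟩)⟩
    have hk2 : (D.Nplus u ∩ D.Nplus x'').ncard = n - 2 := by rw [hinterx'', hd2]
    have := hpair u hu x' hx'X u hu x'' hx''X hux' hux''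
    rw [hk1, hk2] at this
    omega
  have hYfin : D.Y.Finite := by rw [hYeq]; exact hfin.insert y0
  have hYcard : D.Y.ncard = n + 1 := by
    rw [hYeq, Set.ncard_insert_of_notMem hy0S hfin, hcard]
  -- injectivity of N⁺ on X
  have hNinj : ∀ x ∈ D.X, ∀ z ∈ D.X, D.Nplus x = D.Nplus z → x = z := by
    intro x hx z hz hNeq
    by_contra hxz
    have h1 := hpair x hx z hz u hu x' hx'X hxz hux'
    rw [hNeq, Set.inter_self, (hall z hz).2, hk1] at h1
    omega
  -- the matching function
  have hNx : ∀ x ∈ D.X, ∃ y, D.Y \ D.Nplus x = {y} := by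
    intro x hx
    apply Set.ncard_eq_one.mp
    rw [Set.ncard_diff (hNpY x hx) (hall x hx).1, hYcard, (hall x hx).2]
    omega
  set m : V → V := fun x => if h : ∃ y, D.Y \ D.Nplus x = {y} then h.choose else u with hmdef
  have hm : ∀ x ∈ D.X, D.Y \ D.Nplus x = {m x} := by
    intro x hx
    have h := hNx x hx
    rw [hmdef]
    simp only [dif_pos h]
    exact h.choose_spec
  have hmY : ∀ x ∈ D.X, m x ∈ D.Y := by
    intro x hx
    have : m x ∈ D.Y \ D.Nplus x := by rw [hm x hx]; rfl
    exact this.1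
  have hNeq : ∀ x ∈ D.X, D.Nplus x = D.Y \ {m x} := by
    intro x hx
    rw [← hm x hx, Set.diff_diff_cancel_left (hNpY x hx)]
  -- predecessors: N⁻(x) = {m x}
  have hNm : ∀ x ∈ D.X, D.Nminus x = {m x} := by
    intro x hx
    apply Set.Subset.antisymm
    · intro w hw
      rw [← hm x hx]
      exact ⟨hNmY x hx hw, fun h => D.not_opposite x w h hw⟩
    · intro w hw
      rw [Set.mem_singleton_iff] at hw
      obtain ⟨y', hy'Y, hy'E⟩ := hminus x hx
      have : y' ∈ D.Y \ D.Nplus x := ⟨hy'Y, fun h => D.not_opposite x y' h hy'E⟩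
      rw [hm x hx, Set.mem_singleton_iff] at this
      rw [hw, ← this]
      exact hy'E
  refine ⟨hYfin, hYcard, m, ⟨fun x hx => hmY x hx, ?_, ?_⟩, Or.inr ?_⟩
  · -- InjOn
    intro x hx z hz hmeq
    exact hNinj x hx z hz (by rw [hNeq x hx, hNeq z hz, hmeq])
  · -- SurjOn
    intro y hy
    have hTcard : (D.Y \ {y}).ncard = n := by
      rw [Set.ncard_diff_singleton_of_mem hy, hYcard]
      omega
    obtain ⟨x, hx, hxN⟩ := hreal (D.Y \ {y}) Set.diff_subset (hYfin.diff) hTcard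
    refine ⟨x, hx, ?_⟩
    have : D.Y \ D.Nplus x = {y} := by
      rw [hxN, Set.diff_diff_cancel_left (Set.singleton_subset_iff.mpr hy)]
    rw [hm x hx] at this
    exact (Set.singleton_eq_singleton_iff.mp this)
  · -- edge characterisation
    intro x hx y hy
    constructor
    · constructor
      · intro h
        have : y ∈ D.Nminus x := h
        rw [hNm x hx] at this
        exact this
      · intro h
        have : y ∈ D.Nminus x := by rw [hNm x hx]; exact h
        exact this
    · constructor
      · intro h
        have : y ∈ D.Nplus x := h
        rw [hNeq x hx] at this
        exact this.2
      · intro h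
        have : y ∈ D.Nplus x := by rw [hNeq x hx]; exact ⟨hy, h⟩
        exact this
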